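/- arXiv:1505.06881 — 2 statements merged into one kernel-verified Lean document; each statement's English description precedes it below -/
import Mathlib

section
/- Let q be a nondegenerate real quadratic form on ℝ⁴ of signature (2,2) and let g ∈ SO(q). If g has a real eigenvalue α with |α| ≠ 1, then g has no non-real complex eigenvalue of absolute value 1. -/
open Matrix Polynomial

lemma my_charpoly_eval {n : Type*} [Fintype n] [DecidableEq n] {R : Type*} [CommRing R]
    (M : Matrix n n R) (r : R) :
    M.charpoly.eval r = (r • (1 : Matrix n n R) - M).det := by
  rw [Matrix.charpoly, _root_.eval_det, matPolyEquiv_charmatrix]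
  simp [smul_one_eq_diagonal, Matrix.scalar]
  rfl

lemma exists_eigvec {K : Type*} [Field K] {n : Type*} [Fintype n] [DecidableEq n]
    (M : Matrix n n K) {x : K} (h : M.charpoly.eval x = 0) :
    ∃ v, v ≠ 0 ∧ M *ᵥ v = x • v := by
  rw [my_charpoly_eval] at h
  obtain ⟨v, hv0, hv⟩ := (Matrix.exists_mulVec_eq_zero_iff).2 h
  refine ⟨v, hv0, ?_⟩
  rw [Matrix.sub_mulVec, sub_eq_zero] at hv
  rw [← hv, Matrix.smul_mulVec, Matrix.one_mulVec]

lemma form_invariant {n : Type*} [Fintype n] {R : Type*} [CommRing R]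
    {A S : Matrix n n R} (h : Aᵀ * S * A = S) (x y : n → R) :
    (A *ᵥ x) ⬝ᵥ S *ᵥ (A *ᵥ y) = x ⬝ᵥ S *ᵥ y := by
  rw [Matrix.mulVec_mulVec, Matrix.dotProduct_mulVec, ← Matrix.vecMul_transpose,
    Matrix.vecMul_vecMul, ← Matrix.mul_assoc, h, ← Matrix.dotProduct_mulVec]

lemma form_symm {n : Type*} [Fintype n] {R : Type*} [CommRing R]
    {S : Matrix n n R} (h : Sᵀ = S) (x y : n → R) :
    x ⬝ᵥ S *ᵥ y = y ⬝ᵥ S *ᵥ x := by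
  conv_lhs => rw [← h]
  rw [Matrix.dotProduct_mulVec, Matrix.vecMul_transpose, dotProduct_comm]

lemma eig_orth {n : Type*} [Fintype n] {K : Type*} [Field K]
    {A S : Matrix n n K} (h : Aᵀ * S * A = S) {x y : n → K} {a b : K}
    (hx : A *ᵥ x = a • x) (hy : A *ᵥ y = b • y) (hab : a * b ≠ 1) :
    x ⬝ᵥ S *ᵥ y = 0 := by
  have e := form_invariant h x y
  rw [hx, hy, Matrix.mulVec_smul, smul_dotProduct, dotProduct_smul,
    smul_smul, smul_eq_mul] at e
  have h2 : (a * b - 1) * (x ⬝ᵥ S *ᵥ y) = 0 := by ring_nf; linear_combination e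
  rcases mul_eq_zero.1 h2 with h' | h'
  · exact absurd (by linear_combination h') hab
  · exact h'

lemma gram_entry {n : Type*} [Fintype n] {R : Type*} [CommRing R]
    (S P : Matrix n n R) (i j : n) :
    (Pᵀ * S * P) i j = (fun k => P k i) ⬝ᵥ S *ᵥ (fun k => P k j) := by
  simp only [Matrix.mul_apply, dotProduct, Matrix.mulVec, Matrix.transpose_apply,
    Finset.sum_mul, Finset.mul_sum]
  rw [Finset.sum_comm]
  exact Finset.sum_congr rfl fun k _ => Finset.sum_congr rfl fun l _ => by ring

lemma nonreal_sq_ne_one {z : ℂ} (h : z.im ≠ 0) : z * z ≠ 1 := by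
  intro hz
  have h1 : (z * z).re = 1 := by rw [hz]; simp
  have h2 : (z * z).im = 0 := by rw [hz]; simp
  rw [Complex.mul_re] at h1
  rw [Complex.mul_im] at h2
  have hre : z.re = 0 := by
    rcases mul_eq_zero.1 (by linarith : z.re * z.im = 0) with h' | h'
    · exact h'
    · exact absurd h' h
  nlinarith [sq_nonneg z.im]

lemma mulVec_map (g : Matrix (Fin 4) (Fin 4) ℝ) (v : Fin 4 → ℝ) :
    (g.map (algebraMap ℝ ℂ)) *ᵥ (fun i => ((v i : ℝ) : ℂ)) = fun i => (((g *ᵥ v) i : ℝ) : ℂ) := by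
  funext i
  simp [Matrix.mulVec, dotProduct, Matrix.map_apply]

set_option maxHeartbeats 1600000 in
/-- An element of `SO(q)` for a signature `(2,2)` form on `ℝ⁴` with a real
eigenvalue of absolute value `≠ 1` has no non-real eigenvalue of absolute value 1. -/
theorem stmt5 (Q g : Matrix (Fin 4) (Fin 4) ℝ)
    (hQsymm : Q.IsSymm)
    (hsig : ∃ P : Matrix (Fin 4) (Fin 4) ℝ, IsUnit P.det ∧
      Pᵀ * Q * P = Matrix.diagonal ![1, 1, -1, -1])
    (hg : gᵀ * Q * g = Q) (hdet : g.det = 1)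
    (α : ℝ) (hα : g.charpoly.IsRoot α) (hα1 : |α| ≠ 1) :
    ∀ z : ℂ, z.im ≠ 0 → ‖z‖ = 1 →
      ¬ ((g.map (algebraMap ℝ ℂ)).charpoly).IsRoot z := by
  intro z hzim hzabs hz
  -- determinant of Q is positive
  obtain ⟨P₀, hP₀u, hP₀⟩ := hsig
  have hdiag : (Matrix.diagonal ![1,1,-1,-1] : Matrix (Fin 4) (Fin 4) ℝ).det = 1 := by
    simp [Matrix.det_diagonal, Fin.prod_univ_four]
  have hQdet1 : P₀.det * Q.det * P₀.det = 1 := by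
    have h := congrArg Matrix.det hP₀
    rwa [Matrix.det_mul, Matrix.det_mul, Matrix.det_transpose, hdiag] at h
  have hP₀ne : P₀.det ≠ 0 := hP₀u.ne_zero
  have hQpos : 0 < Q.det := by nlinarith [sq_nonneg P₀.det, sq_nonneg (P₀.det * Q.det)]
  have hQne : Q.det ≠ 0 := ne_of_gt hQpos
  -- α is nonzero
  have hα0 : α ≠ 0 := by
    rintro rfl
    have h0 : g.charpoly.eval 0 = 0 := hα
    have hd := Matrix.det_eq_sign_charpoly_coeff g
    rw [Polynomial.coeff_zero_eq_eval_zero, h0, hdet] at hd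
    norm_num at hd
  have hα2 : α * α ≠ 1 := by
    intro h
    rcases mul_self_eq_one_iff.1 h with h' | h' <;> rw [h'] at hα1 <;> simp at hα1
  -- α⁻¹ is also an eigenvalue of g
  have hαdet : (α • (1 : Matrix (Fin 4) (Fin 4) ℝ) - g).det = 0 := by
    rw [← my_charpoly_eval]; exact hα
  have hQinv : Q * Q⁻¹ = 1 := Matrix.mul_nonsing_inv _ (isUnit_iff_ne_zero.2 hQne)
  have key : α⁻¹ • (1 : Matrix (Fin 4) (Fin 4) ℝ) - gᵀ
      = α⁻¹ • (gᵀ * Q * (g - α • 1) * Q⁻¹) := by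
    rw [Matrix.mul_sub, Matrix.sub_mul, hg]
    rw [Matrix.mul_smul, Matrix.mul_one, Matrix.smul_mul]
    rw [Matrix.mul_assoc gᵀ Q Q⁻¹, hQinv, Matrix.mul_one]
    rw [smul_sub, smul_smul, inv_mul_cancel₀ hα0, one_smul]
  have hβdet : (α⁻¹ • (1 : Matrix (Fin 4) (Fin 4) ℝ) - g).det = 0 := by
    have ht : (α⁻¹ • (1 : Matrix (Fin 4) (Fin 4) ℝ) - g).det
        = (α⁻¹ • (1 : Matrix (Fin 4) (Fin 4) ℝ) - gᵀ).det := by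
      rw [← Matrix.det_transpose (α⁻¹ • (1 : Matrix (Fin 4) (Fin 4) ℝ) - gᵀ)]
      congr 1
      rw [Matrix.transpose_sub, Matrix.transpose_smul, Matrix.transpose_one,
        Matrix.transpose_transpose]
    have hsub : (g - α • (1 : Matrix (Fin 4) (Fin 4) ℝ)).det = 0 := by
      have : g - α • (1 : Matrix (Fin 4) (Fin 4) ℝ) = -(α • 1 - g) := (neg_sub _ _).symm
      rw [this, Matrix.det_neg, hαdet]
      simp
    rw [ht, key, Matrix.det_smul, Matrix.det_mul, Matrix.det_mul, Matrix.det_mul, hsub]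
    simp
  -- real eigenvectors
  obtain ⟨v1, hv10, hv1⟩ := exists_eigvec g hα
  obtain ⟨v2, hv20, hv2⟩ := exists_eigvec g (by rw [my_charpoly_eval]; exact hβdet)
  -- complex side
  set A := g.map (algebraMap ℝ ℂ) with hA
  set S := Q.map (algebraMap ℝ ℂ) with hS
  have hAc : Aᵀ * S * A = S := by
    rw [hA, hS, ← Matrix.transpose_map, ← _root_.Matrix.map_mul, ← _root_.Matrix.map_mul, hg]
  obtain ⟨w, hw0, hw⟩ := exists_eigvec A hz
  set wb : Fin 4 → ℂ := fun i => (starRingEnd ℂ) (w i) with hwbdef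
  have hwb : A *ᵥ wb = (starRingEnd ℂ) z • wb := by
    funext i
    have h1 : (A *ᵥ wb) i = (starRingEnd ℂ) ((A *ᵥ w) i) := by
      simp [Matrix.mulVec, dotProduct, map_sum, _root_.map_mul, Matrix.map_apply,
        Complex.conj_ofReal, hwbdef, hA]
    rw [h1, hw]
    simp [hwbdef]
  have hwb0 : wb ≠ 0 := by
    intro h
    apply hw0
    funext i
    have := congrFun h i
    simpa [hwbdef] using congrArg (starRingEnd ℂ) this
  set V1 : Fin 4 → ℂ := fun i => ((v1 i : ℝ) : ℂ) with hV1def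
  set V2 : Fin 4 → ℂ := fun i => ((v2 i : ℝ) : ℂ) with hV2def
  have hV1 : A *ᵥ V1 = ((α : ℝ) : ℂ) • V1 := by
    rw [hV1def, hA, mulVec_map, hv1]
    funext i; simp
  have hV2 : A *ᵥ V2 = ((α⁻¹ : ℝ) : ℂ) • V2 := by
    rw [hV2def, hA, mulVec_map, hv2]
    funext i; simp
  have hV10 : V1 ≠ 0 := by
    intro h; apply hv10; funext i
    have h' := congrFun h i
    rw [hV1def] at h'
    simp only [Pi.zero_apply] at h' ⊢
    exact_mod_cast h'
  have hV20 : V2 ≠ 0 := by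
    intro h; apply hv20; funext i
    have h' := congrFun h i
    rw [hV2def] at h'
    simp only [Pi.zero_apply] at h' ⊢
    exact_mod_cast h'
  -- eigenvalue product facts
  have hzabs' : ‖(starRingEnd ℂ) z‖ = 1 := by
    rw [Complex.norm_conj]; exact hzabs
  have hzim' : ((starRingEnd ℂ) z).im ≠ 0 := by simpa using hzim
  have p00 : ((α : ℝ) : ℂ) * ((α : ℝ) : ℂ) ≠ 1 := by
    intro h; exact hα2 (by exact_mod_cast h)
  have hαinv2 : α⁻¹ * α⁻¹ ≠ 1 := by
    intro h; apply hα2; field_simp at h; linarith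
  have p11 : ((α⁻¹ : ℝ) : ℂ) * ((α⁻¹ : ℝ) : ℂ) ≠ 1 := by
    intro h; exact hαinv2 (by exact_mod_cast h)
  have pa : ∀ u : ℂ, ‖u‖ = 1 → ((α : ℝ) : ℂ) * u ≠ 1 := by
    intro u hu h
    apply hα1
    have h2 := congrArg (‖·‖) h
    rwa [norm_mul, Complex.norm_real, Real.norm_eq_abs, hu, mul_one, norm_one] at h2
  have painv : ∀ u : ℂ, ‖u‖ = 1 → ((α⁻¹ : ℝ) : ℂ) * u ≠ 1 := by
    intro u hu h
    apply hα1
    have h2 := congrArg (‖·‖) h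
    rw [norm_mul, Complex.norm_real, Real.norm_eq_abs, hu, mul_one, norm_one, abs_inv] at h2
    exact inv_eq_one.1 h2
  -- distinctness of the four eigenvalues
  have d01 : ((α : ℝ) : ℂ) ≠ ((α⁻¹ : ℝ) : ℂ) := by
    intro h
    have h' : α = α⁻¹ := by exact_mod_cast h
    apply hα2
    calc α * α = α * α⁻¹ := by rw [← h']
    _ = 1 := mul_inv_cancel₀ hα0
  have d02 : ((α : ℝ) : ℂ) ≠ z := by
    intro h; exact hzim (by rw [← h]; simp)
  have d03 : ((α : ℝ) : ℂ) ≠ (starRingEnd ℂ) z := by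
    intro h; exact hzim' (by rw [← h]; simp)
  have d12 : ((α⁻¹ : ℝ) : ℂ) ≠ z := by
    intro h; exact hzim (by rw [← h]; simp)
  have d13 : ((α⁻¹ : ℝ) : ℂ) ≠ (starRingEnd ℂ) z := by
    intro h; exact hzim' (by rw [← h]; simp)
  have d23 : z ≠ (starRingEnd ℂ) z := by
    intro h
    apply hzim
    have := congrArg Complex.im h
    simp at this
    linarith
  have hinj : Function.Injective
      (![((α : ℝ) : ℂ), ((α⁻¹ : ℝ) : ℂ), z, (starRingEnd ℂ) z] : Fin 4 → ℂ) := by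
    intro i j hij
    fin_cases i <;> fin_cases j <;>
      simp only [Matrix.cons_val_zero, Matrix.cons_val_one, Matrix.head_cons,
        Matrix.cons_val_two, Matrix.tail_cons, Matrix.cons_val_three, Fin.mk_zero,
        Fin.mk_one] at hij ⊢ <;>
      first
      | rfl
      | exact absurd hij d01 | exact absurd hij d01.symm
      | exact absurd hij d02 | exact absurd hij d02.symm
      | exact absurd hij d03 | exact absurd hij d03.symm
      | exact absurd hij d12 | exact absurd hij d12.symm
      | exact absurd hij d13 | exact absurd hij d13.symm
      | exact absurd hij d23 | exact absurd hij d23.symm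
  -- linear independence of the four eigenvectors
  have heig : ∀ i : Fin 4, Module.End.HasEigenvector
      (Matrix.mulVecLin A : Module.End ℂ (Fin 4 → ℂ))
      (![((α : ℝ) : ℂ), ((α⁻¹ : ℝ) : ℂ), z, (starRingEnd ℂ) z] i)
      (![V1, V2, w, wb] i) := by
    intro i
    refine ⟨?_, ?_⟩
    · rw [Module.End.mem_eigenspace_iff]
      fin_cases i <;>
        simp only [Matrix.cons_val_zero, Matrix.cons_val_one, Matrix.head_cons,
          Matrix.cons_val_two, Matrix.tail_cons, Matrix.cons_val_three,
          Matrix.mulVecLin_apply] <;>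
        first
        | exact hV1 | exact hV2 | exact hw | exact hwb
    · fin_cases i <;>
        simp only [Matrix.cons_val_zero, Matrix.cons_val_one, Matrix.head_cons,
          Matrix.cons_val_two, Matrix.tail_cons, Matrix.cons_val_three] <;>
        first
        | exact hV10 | exact hV20 | exact hw0 | exact hwb0
  have hli := Module.End.eigenvectors_linearIndependent' A.mulVecLin _ hinj _ heig
  set P : Matrix (Fin 4) (Fin 4) ℂ := (Matrix.of ![V1, V2, w, wb])ᵀ with hPdef
  have hPunit : IsUnit P := by
    rw [← Matrix.linearIndependent_cols_iff_isUnit]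
    have hc : P.col = ![V1, V2, w, wb] := by
      funext i; rw [hPdef]; rfl
    rw [hc]; exact hli
  have hPdetne : P.det ≠ 0 := ((Matrix.isUnit_iff_isUnit_det P).1 hPunit).ne_zero
  -- Gram matrix
  have hSsymm : Sᵀ = S := by rw [hS, ← Matrix.transpose_map, hQsymm]
  set a : ℂ := V1 ⬝ᵥ S *ᵥ V2 with hadef
  set b : ℂ := w ⬝ᵥ S *ᵥ wb with hbdef
  have e00 : V1 ⬝ᵥ S *ᵥ V1 = 0 := eig_orth hAc hV1 hV1 p00
  have e02 : V1 ⬝ᵥ S *ᵥ w = 0 := eig_orth hAc hV1 hw (pa z hzabs)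
  have e03 : V1 ⬝ᵥ S *ᵥ wb = 0 := eig_orth hAc hV1 hwb (pa _ hzabs')
  have e11 : V2 ⬝ᵥ S *ᵥ V2 = 0 := eig_orth hAc hV2 hV2 p11
  have e12 : V2 ⬝ᵥ S *ᵥ w = 0 := eig_orth hAc hV2 hw (painv z hzabs)
  have e13 : V2 ⬝ᵥ S *ᵥ wb = 0 := eig_orth hAc hV2 hwb (painv _ hzabs')
  have e22 : w ⬝ᵥ S *ᵥ w = 0 := eig_orth hAc hw hw (nonreal_sq_ne_one hzim)
  have e33 : wb ⬝ᵥ S *ᵥ wb = 0 := eig_orth hAc hwb hwb (nonreal_sq_ne_one hzim')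
  have e20 : w ⬝ᵥ S *ᵥ V1 = 0 := by rw [form_symm hSsymm]; exact e02
  have e30 : wb ⬝ᵥ S *ᵥ V1 = 0 := by rw [form_symm hSsymm]; exact e03
  have e21 : w ⬝ᵥ S *ᵥ V2 = 0 := by rw [form_symm hSsymm]; exact e12
  have e31 : wb ⬝ᵥ S *ᵥ V2 = 0 := by rw [form_symm hSsymm]; exact e13
  have h10 : V2 ⬝ᵥ S *ᵥ V1 = a := by rw [form_symm hSsymm]
  have h32 : wb ⬝ᵥ S *ᵥ w = b := by rw [form_symm hSsymm]
  have hGmat : Pᵀ * S * P = !![0,a,0,0; a,0,0,0; 0,0,0,b; 0,0,b,0] := by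
    ext i j
    rw [gram_entry]
    fin_cases i <;> fin_cases j <;>
      simp [hPdef, Matrix.vecHead, Matrix.vecTail, Matrix.transpose_apply, Function.comp,
        e00, e02, e03, e11, e12, e13, e22, e33, e20, e30, e21, e31, h10, h32,
        hadef, hbdef]
  have hrhs : (!![0,a,0,0; a,0,0,0; 0,0,0,b; 0,0,b,0] : Matrix (Fin 4) (Fin 4) ℂ).det
      = a ^ 2 * b ^ 2 := by
    simp [Matrix.det_succ_row_zero, Fin.sum_univ_succ, Fin.succAbove]
    ring
  have hSdet : S.det = ((Q.det : ℝ) : ℂ) := by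
    rw [hS]; exact (RingHom.map_det (algebraMap ℝ ℂ) Q).symm
  have hEq : ((Q.det : ℝ) : ℂ) * P.det ^ 2 = a ^ 2 * b ^ 2 := by
    have h := congrArg Matrix.det hGmat
    rw [Matrix.det_mul, Matrix.det_mul, Matrix.det_transpose, hSdet, hrhs] at h
    linear_combination h
  -- conjugation facts
  have hconjd : (starRingEnd ℂ) P.det = - P.det := by
    have hperm : P.map (starRingEnd ℂ) = P.submatrix id (Equiv.swap 2 3) := by
      ext k i
      fin_cases i <;>
        simp [hPdef, hV1def, hV2def, hwbdef, Complex.conj_ofReal, Equiv.swap_apply_def,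
          Matrix.vecHead, Matrix.vecTail, Matrix.transpose_apply, Function.comp]
    have h1 : (starRingEnd ℂ) P.det = (P.map (starRingEnd ℂ)).det :=
      RingHom.map_det (starRingEnd ℂ) P
    rw [h1, hperm, Matrix.det_permute' (Equiv.swap 2 3) P,
      Equiv.Perm.sign_swap (by decide : (2 : Fin 4) ≠ 3)]
    simp
  have hdre : P.det.re = 0 := by
    have h := congrArg Complex.re hconjd
    simp at h
    linarith
  have hdim : P.det.im ≠ 0 := by
    intro h
    exact hPdetne (Complex.ext hdre h)
  have hca : (starRingEnd ℂ) a = a := by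
    rw [hadef]
    simp [dotProduct, Matrix.mulVec, map_sum, _root_.map_mul, hS, Matrix.map_apply,
      Complex.conj_ofReal, hV1def, hV2def]
  have hcb : (starRingEnd ℂ) b = b := by
    have h1 : (starRingEnd ℂ) b = wb ⬝ᵥ S *ᵥ w := by
      rw [hbdef]
      simp [dotProduct, Matrix.mulVec, map_sum, _root_.map_mul, hS, Matrix.map_apply,
        Complex.conj_ofReal, hwbdef]
    rw [h1, form_symm hSsymm]
  have ha' : ((a.re : ℝ) : ℂ) = a := Complex.conj_eq_iff_re.1 hca
  have hb' : ((b.re : ℝ) : ℂ) = b := Complex.conj_eq_iff_re.1 hcb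
  have hd2 : P.det ^ 2 = ((-(P.det.im ^ 2) : ℝ) : ℂ) := by
    have hdi : P.det = (P.det.im : ℂ) * Complex.I := by
      apply Complex.ext <;> simp [hdre]
    conv_lhs => rw [hdi]
    rw [mul_pow, Complex.I_sq]
    push_cast
    ring
  rw [hd2, ← ha', ← hb'] at hEq
  have hreal : Q.det * (-(P.det.im ^ 2)) = a.re ^ 2 * b.re ^ 2 := by
    have := hEq
    push_cast at this
    exact_mod_cast this
  nlinarith [sq_nonneg (a.re * b.re), sq_nonneg P.det.im, sq_pos_of_ne_zero hdim]
end

section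
/- Let g be an element of the orthogonal group of a nondegenerate symmetric bilinear form on ℝ⁴. Then g cannot have Jordan type [2,1,1] with the 2×2 block having eigenvalue α and the two 1×1 blocks both having eigenvalue 1/α, for any real α ≠ 0. Concretely: there is no basis (v₁,v₂,v₃,v₄) of ℝ⁴ with g v₁ = α v₁, g v₂ = α v₂ + v₁, g v₃ = (1/α) v₃, g v₄ = (1/α) v₄ for g preserving a nondegenerate symmetric bilinear form. -/
/-- No isometry of a nondegenerate symmetric bilinear form on `ℝ⁴` has Jordan
type `[2,1,1]` with eigenvalues `α, α, 1/α, 1/α` (block of size 2 for `α`). -/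
theorem stmt8 (B : LinearMap.BilinForm ℝ (Fin 4 → ℝ))
    (hsymm : ∀ x y, B x y = B y x) (hnd : B.Nondegenerate)
    (g : (Fin 4 → ℝ) →ₗ[ℝ] (Fin 4 → ℝ))
    (hg : ∀ x y, B (g x) (g y) = B x y)
    (α : ℝ) (hα : α ≠ 0)
    (b : Module.Basis (Fin 4) ℝ (Fin 4 → ℝ))
    (h1 : g (b 0) = α • b 0)
    (h2 : g (b 1) = α • b 1 + b 0)
    (h3 : g (b 2) = α⁻¹ • b 2)
    (h4 : g (b 3) = α⁻¹ • b 3) : False := by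
  have e11 := hg (b 0) (b 0)
  have e12 := hg (b 0) (b 1)
  have e22 := hg (b 1) (b 1)
  have e23 := hg (b 1) (b 2)
  have e24 := hg (b 1) (b 3)
  rw [h1] at e11 e12
  rw [h2] at e12 e22 e23 e24
  rw [h3] at e23
  rw [h4] at e24
  simp only [map_add, map_smul, LinearMap.add_apply, LinearMap.smul_apply,
    smul_eq_mul] at e11 e12 e22 e23 e24
  have hs : B (b 1) (b 0) = B (b 0) (b 1) := hsymm _ _
  -- derive B (b 0) (b 2) = 0 and B (b 0) (b 3) = 0
  have h02 : B (b 0) (b 2) = 0 := by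
    have := e23
    field_simp at this
    nlinarith [this]
  have h03 : B (b 0) (b 3) = 0 := by
    have := e24
    field_simp at this
    nlinarith [this]
  -- derive B (b 0) (b 0) = 0 and B (b 0) (b 1) = 0
  have h00 : B (b 0) (b 0) = 0 := by
    by_cases h : α * α = 1
    · have hz : α * B (b 0) (b 0) = 0 := by
        linear_combination e12 - (B (b 0)) (b 1) * h
      exact (mul_eq_zero.mp hz).resolve_left hα
    · have hne : α * α - 1 ≠ 0 := fun hh => h (by linarith)
      have hz : (α * α - 1) * B (b 0) (b 0) = 0 := by linear_combination e11
      exact (mul_eq_zero.mp hz).resolve_left hne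
  have h01 : B (b 0) (b 1) = 0 := by
    by_cases h : α * α = 1
    · have hz : α * B (b 0) (b 1) = 0 := by
        linear_combination (1/2) * e22 - (1/2) * h00 - (α/2) * hs
          - ((B (b 1)) (b 1) / 2) * h
      exact (mul_eq_zero.mp hz).resolve_left hα
    · have hne : α * α - 1 ≠ 0 := fun hh => h (by linarith)
      have hz : (α * α - 1) * B (b 0) (b 1) = 0 := by
        linear_combination e12 - α * h00
      exact (mul_eq_zero.mp hz).resolve_left hne
  have hz : (B (b 0) : (Fin 4 → ℝ) →ₗ[ℝ] ℝ) = 0 := b.ext fun i => by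
    fin_cases i <;> simpa using (by assumption : _)
  have h0 : b 0 = 0 := hnd.1 (b 0) (fun n => by rw [hz]; rfl)
  exact b.ne_zero 0 h0
end
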